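/- For the normalized Gaussian G_s(x) = exp(-x²/(2s²)) with s > 0, there exist constants 0 < A ≤ B < ∞ such that for all ξ ∈ ℝ, A ≤ ∑_{k∈ℤ} |Ĝ_s(ξ + 2kπ)|² ≤ B, where Ĝ_s denotes the Fourier transform of G_s. In particular one may take A = e^{-(2πs)²}·c² where Ĝ_s(ξ) = c·e^{-ξ²s²/2}. -/

import Mathlib

open Real

private lemma term_eq (c t : ℝ) (hc : 0 ≤ c) :
    |c * Real.exp (t / 2)| ^ 2 = c ^ 2 * Real.exp t := by
  have ht : t / 2 + t / 2 = t := by ring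
  rw [abs_of_nonneg (by positivity), mul_pow, pow_two (Real.exp (t / 2)), ← Real.exp_add, ht]

private lemma key (s : ℝ) (hs : 0 < s) (ξ : ℝ) (h0 : 0 ≤ ξ) (h2 : ξ < 2 * π) :
    Summable (fun k : ℤ => |s * Real.sqrt (2 * π) * Real.exp (-(ξ + 2 * k * π) ^ 2 * s ^ 2 / 2)| ^ 2) ∧
    Real.exp (-(2 * π * s) ^ 2) * (s * Real.sqrt (2 * π)) ^ 2 ≤
      ∑' k : ℤ, |s * Real.sqrt (2 * π) * Real.exp (-(ξ + 2 * k * π) ^ 2 * s ^ 2 / 2)| ^ 2 ∧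
    ∑' k : ℤ, |s * Real.sqrt (2 * π) * Real.exp (-(ξ + 2 * k * π) ^ 2 * s ^ 2 / 2)| ^ 2 ≤
      (s * Real.sqrt (2 * π)) ^ 2 * (1 - Real.exp (-(2 * π * s) ^ 2))⁻¹ +
      (s * Real.sqrt (2 * π)) ^ 2 * (1 - Real.exp (-(2 * π * s) ^ 2))⁻¹ := by
  have hπ := Real.pi_pos
  set c : ℝ := s * Real.sqrt (2 * π) with hc
  have hc0 : 0 ≤ c := by positivity
  set q : ℝ := Real.exp (-(2 * π * s) ^ 2) with hq
  have hq0 : 0 ≤ q := Real.exp_nonneg _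
  have hq1 : q < 1 := by
    rw [hq, Real.exp_lt_one_iff]
    have : 0 < (2 * π * s) ^ 2 := by positivity
    linarith
  set f : ℤ → ℝ := fun k => |c * Real.exp (-(ξ + 2 * k * π) ^ 2 * s ^ 2 / 2)| ^ 2 with hf
  have hfe : ∀ k : ℤ, f k = c ^ 2 * Real.exp (-(ξ + 2 * k * π) ^ 2 * s ^ 2) := by
    intro k
    have := term_eq c (-(ξ + 2 * k * π) ^ 2 * s ^ 2) hc0
    simpa [hf, mul_div_assoc] using this
  set g : ℤ → ℝ := fun k => Int.rec (fun n => c ^ 2 * q ^ n) (fun n => c ^ 2 * q ^ n) k with hg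
  have hgs : HasSum g (c ^ 2 * (1 - q)⁻¹ + c ^ 2 * (1 - q)⁻¹) :=
    HasSum.int_rec ((hasSum_geometric_of_lt_one hq0 hq1).mul_left _)
      ((hasSum_geometric_of_lt_one hq0 hq1).mul_left _)
  have hqn : ∀ n : ℕ, q ^ n = Real.exp (-(4 * π ^ 2 * s ^ 2) * n) := by
    intro n
    rw [hq, ← Real.exp_nat_mul]
    congr 1; ring
  have hfg : ∀ k : ℤ, f k ≤ g k := by
    intro k
    rw [hfe k]
    cases k with
    | ofNat n =>
      show c ^ 2 * Real.exp (-(ξ + 2 * (Int.ofNat n : ℤ) * π) ^ 2 * s ^ 2) ≤ c ^ 2 * q ^ n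
      rw [hqn n]
      apply mul_le_mul_of_nonneg_left _ (by positivity)
      apply Real.exp_le_exp.2
      have hcast : ((Int.ofNat n : ℤ) : ℝ) = (n : ℝ) := by simp
      rw [hcast]
      have hn : (n : ℝ) ≤ (n : ℝ) ^ 2 := by
        have := Nat.le_self_pow (two_ne_zero) n
        exact_mod_cast this
      have hx : 2 * π * n ≤ ξ + 2 * n * π := by
        have := Nat.cast_nonneg (α := ℝ) n; nlinarith
      have hx0 : 0 ≤ 2 * π * (n : ℝ) := by positivity
      have hsq : (2 * π * n) ^ 2 ≤ (ξ + 2 * n * π) ^ 2 := by nlinarith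
      nlinarith [sq_nonneg s]
    | negSucc n =>
      show c ^ 2 * Real.exp (-(ξ + 2 * (Int.negSucc n : ℤ) * π) ^ 2 * s ^ 2) ≤ c ^ 2 * q ^ n
      rw [hqn n]
      apply mul_le_mul_of_nonneg_left _ (by positivity)
      apply Real.exp_le_exp.2
      have hcast : ((Int.negSucc n : ℤ) : ℝ) = -((n : ℝ) + 1) := by
        simp [Int.cast_negSucc]
      rw [hcast]
      have hn : (n : ℝ) ≤ (n : ℝ) ^ 2 := by
        have := Nat.le_self_pow (two_ne_zero) n
        exact_mod_cast this
      have hx : ξ + 2 * (-((n : ℝ) + 1)) * π ≤ -(2 * π * n) := by nlinarith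
      have hx0 : 0 ≤ 2 * π * (n : ℝ) := by positivity
      have hsq : (2 * π * n) ^ 2 ≤ (ξ + 2 * (-((n : ℝ) + 1)) * π) ^ 2 := by nlinarith
      nlinarith [sq_nonneg s]
  have hfnn : ∀ k : ℤ, 0 ≤ f k := fun k => by positivity
  have hsum : Summable f := Summable.of_nonneg_of_le hfnn hfg hgs.summable
  refine ⟨hsum, ?_, ?_⟩
  · have h00 : q * c ^ 2 ≤ f 0 := by
      rw [hfe 0, mul_comm]
      apply mul_le_mul_of_nonneg_left _ (by positivity)
      rw [hq]
      apply Real.exp_le_exp.2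
      push_cast
      nlinarith [mul_nonneg (mul_nonneg (by linarith : (0:ℝ) ≤ 2 * π - ξ)
        (by linarith : (0:ℝ) ≤ 2 * π + ξ)) (sq_nonneg s)]
    calc q * c ^ 2 ≤ f 0 := h00
      _ ≤ ∑' k, f k := Summable.le_tsum hsum 0 (fun j _ => hfnn j)
  · calc ∑' k, f k ≤ ∑' k, g k := Summable.tsum_le_tsum hfg hsum hgs.summable
      _ = c ^ 2 * (1 - q)⁻¹ + c ^ 2 * (1 - q)⁻¹ := hgs.tsum_eq

/-- The Gaussian G_s satisfies the Fourier-domain Riesz bounds: with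
Ĝ_s(ξ) = c·e^{-ξ²s²/2}, c = s√(2π), there are constants 0 < A ≤ B < ∞ bounding
∑_{k∈ℤ} |Ĝ_s(ξ + 2kπ)|² for all ξ; one may take A = e^{-(2πs)²}·c². -/
theorem gaussian_riesz_bounds (s : ℝ) (hs : 0 < s) :
    ∃ B : ℝ, Real.exp (-(2 * π * s) ^ 2) * (s * Real.sqrt (2 * π)) ^ 2 ≤ B ∧
      (0 < Real.exp (-(2 * π * s) ^ 2) * (s * Real.sqrt (2 * π)) ^ 2) ∧
      ∀ ξ : ℝ,
        Real.exp (-(2 * π * s) ^ 2) * (s * Real.sqrt (2 * π)) ^ 2 ≤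
            ∑' k : ℤ, |s * Real.sqrt (2 * π) * Real.exp (-(ξ + 2 * k * π) ^ 2 * s ^ 2 / 2)| ^ 2 ∧
          ∑' k : ℤ, |s * Real.sqrt (2 * π) * Real.exp (-(ξ + 2 * k * π) ^ 2 * s ^ 2 / 2)| ^ 2 ≤ B := by
  have hπ := Real.pi_pos
  set c : ℝ := s * Real.sqrt (2 * π) with hc
  have hc0 : 0 < c ^ 2 := by
    have h2π : (0:ℝ) < 2 * π := by linarith
    have := Real.sqrt_pos.2 h2π
    positivity
  set q : ℝ := Real.exp (-(2 * π * s) ^ 2) with hq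
  have hq0 : 0 < q := Real.exp_pos _
  have hq1 : q < 1 := by
    rw [hq, Real.exp_lt_one_iff]
    have : 0 < (2 * π * s) ^ 2 := by positivity
    linarith
  refine ⟨c ^ 2 * (1 - q)⁻¹ + c ^ 2 * (1 - q)⁻¹, ?_, by positivity, ?_⟩
  · have h1 : (1:ℝ) ≤ (1 - q)⁻¹ := by
      rw [le_inv_comm₀ one_pos (by linarith)]
      simp only [inv_one]; linarith
    nlinarith
  · intro ξ
    set n : ℤ := ⌊ξ / (2 * π)⌋ with hn
    set ξ' : ℝ := ξ - 2 * π * n with hξ'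
    have h2π : (0:ℝ) < 2 * π := by linarith
    have hfl : ((n : ℝ)) * (2 * π) ≤ ξ := by
      have := (le_div_iff₀ h2π).1 (Int.floor_le (ξ / (2 * π)))
      exact this
    have hfl2 : ξ < ((n : ℝ) + 1) * (2 * π) := by
      have := (div_lt_iff₀ h2π).1 (Int.lt_floor_add_one (ξ / (2 * π)))
      exact_mod_cast this
    have h0 : 0 ≤ ξ' := by rw [hξ']; nlinarith
    have h2 : ξ' < 2 * π := by rw [hξ']; nlinarith
    obtain ⟨hsum', hlow, hhigh⟩ := key s hs ξ' h0 h2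
    have heq : ∑' k : ℤ, |c * Real.exp (-(ξ + 2 * k * π) ^ 2 * s ^ 2 / 2)| ^ 2 =
        ∑' k : ℤ, |c * Real.exp (-(ξ' + 2 * k * π) ^ 2 * s ^ 2 / 2)| ^ 2 := by
      have hre : ∀ k : ℤ, |c * Real.exp (-(ξ + 2 * k * π) ^ 2 * s ^ 2 / 2)| ^ 2 =
          |c * Real.exp (-(ξ' + 2 * ((k + n : ℤ) : ℝ) * π) ^ 2 * s ^ 2 / 2)| ^ 2 := by
        intro k
        congr 3
        rw [hξ']
        push_cast
        ring
      calc ∑' k : ℤ, |c * Real.exp (-(ξ + 2 * k * π) ^ 2 * s ^ 2 / 2)| ^ 2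
          = ∑' k : ℤ, |c * Real.exp (-(ξ' + 2 * ((k + n : ℤ) : ℝ) * π) ^ 2 * s ^ 2 / 2)| ^ 2 :=
            tsum_congr hre
        _ = ∑' k : ℤ, |c * Real.exp (-(ξ' + 2 * k * π) ^ 2 * s ^ 2 / 2)| ^ 2 :=
            (Equiv.addRight n).tsum_eq
              (fun j : ℤ => |c * Real.exp (-(ξ' + 2 * (j : ℝ) * π) ^ 2 * s ^ 2 / 2)| ^ 2)
    rw [heq]
    exact ⟨hlow, hhigh⟩
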